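/- Let A, B, C be homogeneous polynomials of degree d+1 in variables X, Y, Z over ℂ such that X·A + Y·B + Z·C = 0. Then there exist homogeneous polynomials P, Q, R of degree d such that A = Z·Q − Y·R, B = X·R − Z·P, and C = Y·P − X·Q. -/

import Mathlib

open MvPolynomial

private abbrev MP3 := MvPolynomial (Fin 3) ℂ

private lemma primeX3 (i : Fin 3) : Prime (X i : MP3) := by
  rw [← MulEquiv.prime_iff (renameEquiv ℂ (Equiv.swap i 0)).toMulEquiv]
  have h1 : (renameEquiv ℂ (Equiv.swap i 0)).toMulEquiv (X i : MP3) = X 0 := by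
    simp [renameEquiv_apply]
  rw [h1, ← MulEquiv.prime_iff (finSuccEquiv ℂ 2).toMulEquiv]
  have h2 : (finSuccEquiv ℂ 2).toMulEquiv (X 0 : MP3) = Polynomial.X := finSuccEquiv_X_zero
  rw [h2]
  exact Polynomial.prime_X

private lemma degree_sub_single {m : Fin 3 →₀ ℕ} {i : Fin 3} (h : m i ≠ 0) :
    (m - Finsupp.single i 1).degree + 1 = m.degree := by
  have hle : Finsupp.single i 1 ≤ m := by
    rwa [Finsupp.single_le_iff, Nat.one_le_iff_ne_zero]
  have hm : (m - Finsupp.single i 1) + Finsupp.single i 1 = m := tsub_add_cancel_of_le hle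
  have hds : (Finsupp.single i 1 : Fin 3 →₀ ℕ).degree = 1 := by
    rw [Finsupp.degree_apply, Finsupp.support_single_ne_zero _ one_ne_zero, Finset.sum_singleton,
      Finsupp.single_eq_same]
  calc (m - Finsupp.single i 1).degree + 1
      = (m - Finsupp.single i 1).degree + (Finsupp.single i 1 : Fin 3 →₀ ℕ).degree := by rw [hds]
    _ = ((m - Finsupp.single i 1) + Finsupp.single i 1).degree := by
        simp [Finsupp.degree_eq_weight_one, map_add]
    _ = m.degree := by rw [hm]

private lemma hc_X_mul (i : Fin 3) (n : ℕ) (q : MP3) :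
    homogeneousComponent (n + 1) (X i * q) = X i * homogeneousComponent n q := by
  classical
  ext m
  simp only [coeff_homogeneousComponent, coeff_X_mul']
  by_cases h : i ∈ m.support
  · simp only [if_pos h, coeff_homogeneousComponent]
    have hmi : m i ≠ 0 := Finsupp.mem_support_iff.mp h
    have hdeg := degree_sub_single hmi
    by_cases hd : m.degree = n + 1
    · rw [if_pos hd, if_pos (by omega)]
    · rw [if_neg hd, if_neg (by omega)]
  · simp only [if_neg h, ite_self]

private def XFree (i : Fin 3) (p : MP3) : Prop :=
  ∀ m : Fin 3 →₀ ℕ, m i ≠ 0 → coeff m p = 0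

private lemma xfree_mod (i : Fin 3) (p : MP3) :
    XFree i (p.modMonomial (Finsupp.single i 1)) := by
  intro m hm
  apply coeff_modMonomial_of_le
  rwa [Finsupp.single_le_iff, Nat.one_le_iff_ne_zero]

private lemma xfree_X_mul {i j : Fin 3} (hij : j ≠ i) {p : MP3} (hp : XFree i p) :
    XFree i (X j * p) := by
  intro m hm
  classical
  rw [coeff_X_mul']
  split_ifs with h
  · apply hp
    rwa [Finsupp.tsub_apply, Finsupp.single_eq_of_ne' hij, Nat.sub_zero]
  · rfl

private lemma xfree_eq_zero {i : Fin 3} {v : MP3} (hv : XFree i v) (hdvd : X i ∣ v) :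
    v = 0 := by
  classical
  obtain ⟨w, rfl⟩ := hdvd
  ext m
  by_cases h : m i = 0
  · rw [coeff_X_mul', if_neg (by simp [Finsupp.mem_support_iff, h]), coeff_zero]
  · rw [hv m h, coeff_zero]

theorem stmt_0 (d : ℕ) (A B C : MvPolynomial (Fin 3) ℂ)
    (hA : A.IsHomogeneous (d + 1)) (hB : B.IsHomogeneous (d + 1))
    (hC : C.IsHomogeneous (d + 1))
    (h : X 0 * A + X 1 * B + X 2 * C = 0) :
    ∃ P Q R : MvPolynomial (Fin 3) ℂ,
      P.IsHomogeneous d ∧ Q.IsHomogeneous d ∧ R.IsHomogeneous d ∧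
      A = X 2 * Q - X 1 * R ∧ B = X 0 * R - X 2 * P ∧ C = X 1 * P - X 0 * Q := by
  classical
  set B1 := B.divMonomial (Finsupp.single 0 1) with hB1def
  set B0 := B.modMonomial (Finsupp.single 0 1) with hB0def
  set C1 := C.divMonomial (Finsupp.single 0 1) with hC1def
  set C0 := C.modMonomial (Finsupp.single 0 1) with hC0def
  have hBsplit : X 0 * B1 + B0 = B := divMonomial_add_modMonomial_single B 0
  have hCsplit : X 0 * C1 + C0 = C := divMonomial_add_modMonomial_single C 0
  set u := A + X 1 * B1 + X 2 * C1 with hudef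
  set v := X 1 * B0 + X 2 * C0 with hvdef
  have huv : X 0 * u + v = 0 := by
    rw [hudef, hvdef]
    linear_combination h + X 1 * hBsplit + X 2 * hCsplit
  have hvfree : XFree 0 v := by
    intro m hm
    rw [hvdef, coeff_add,
      xfree_X_mul (by decide) (xfree_mod 0 B) m hm,
      xfree_X_mul (by decide) (xfree_mod 0 C) m hm, add_zero]
  have hv0 : v = 0 := xfree_eq_zero hvfree ⟨-u, by linear_combination huv⟩
  have hu0 : u = 0 := by
    have hx0 : (X 0 : MP3) ≠ 0 := (primeX3 0).ne_zero
    have : X 0 * u = 0 := by rw [← huv, hv0, add_zero]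
    exact (mul_eq_zero.mp this).resolve_left hx0
  -- X 2 divides B0
  have hdvd : (X 2 : MP3) ∣ X 1 * B0 := ⟨-C0, by rw [hvdef] at hv0; linear_combination hv0⟩
  have hndvd : ¬ (X 2 : MP3) ∣ X 1 := by
    rw [X_dvd_X]; decide
  obtain ⟨S, hS⟩ := ((primeX3 2).dvd_mul.mp hdvd).resolve_left hndvd
  have hC0 : C0 = -(X 1 * S) := by
    have hx2 : (X 2 : MP3) ≠ 0 := (primeX3 2).ne_zero
    have h2 : X 2 * (X 1 * S + C0) = 0 := by
      rw [hvdef] at hv0; linear_combination hv0 - X 1 * hS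
    have := (mul_eq_zero.mp h2).resolve_left hx2
    linear_combination this
  -- the raw witnesses
  have hAeq : A = X 2 * (-C1) - X 1 * B1 := by
    rw [hudef] at hu0; linear_combination hu0
  have hBeq : B = X 0 * B1 - X 2 * (-S) := by linear_combination hS - hBsplit
  have hCeq : C = X 1 * (-S) - X 0 * (-C1) := by linear_combination hC0 - hCsplit
  -- homogenize
  refine ⟨homogeneousComponent d (-S), homogeneousComponent d (-C1),
    homogeneousComponent d B1,
    homogeneousComponent_isHomogeneous d _, homogeneousComponent_isHomogeneous d _,
    homogeneousComponent_isHomogeneous d _, ?_, ?_, ?_⟩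
  · have := congrArg (homogeneousComponent (d + 1)) hAeq
    rwa [homogeneousComponent_of_mem (mem_homogeneousSubmodule _ _ |>.mpr hA),
      if_pos rfl, map_sub, hc_X_mul, hc_X_mul] at this
  · have := congrArg (homogeneousComponent (d + 1)) hBeq
    rwa [homogeneousComponent_of_mem (mem_homogeneousSubmodule _ _ |>.mpr hB),
      if_pos rfl, map_sub, hc_X_mul, hc_X_mul] at this
  · have := congrArg (homogeneousComponent (d + 1)) hCeq
    rwa [homogeneousComponent_of_mem (mem_homogeneousSubmodule _ _ |>.mpr hC),
      if_pos rfl, map_sub, hc_X_mul, hc_X_mul] at this
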